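/- Assume m ≥ 2. Then for every z ∈ ℂ, C(z) = |g| · Σ_{j=1}^{n} Σ_{t=1}^{n} Q̃_{(0,j),(m−1,t)} · λ_t · z^{m−2} · ∏_{ℓ≠t} (z^m − λ_ℓ^m), where Q̃_{(0,j),(m−1,t)} denotes the entry of Q̃ in row (0,j) and column (m−1,t). -/

import Mathlib

open Matrix BigOperators

noncomputable section

/-- The block matrix `L̃` with diagonal blocks `Λ = diag(λ₁,…,λₙ)` at positions `(h, h+1)`:
its entry in row `(h,j)` and column `(i,k)` is `λⱼ` if `k = j` and `i = h + 1` in `ℤ/mℤ`,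
and `0` otherwise. -/
def Ltilde (m n : ℕ) (lam : Fin n → ℂ) :
    Matrix (ZMod m × Fin n) (ZMod m × Fin n) ℂ :=
  Matrix.of fun p q => if q.2 = p.2 ∧ q.1 = p.1 + 1 then lam p.2 else 0

/-- `|g| = g₀ + g₁ + ⋯ + g_{m-1}`. -/
def gAbs (m : ℕ) (g : ZMod m → ℂ) : ℂ :=
  ∑ s ∈ Finset.range m, g (s : ZMod m)

/-- `cᵢ = Σ_{r=0}^{i} g_r − Σ_{s=0}^{m−1} ((m−s)/m)·g_s`, the index `i` read modulo `m`. -/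
def cConst (m : ℕ) (g : ZMod m → ℂ) (i : ZMod m) : ℂ :=
  (∑ r ∈ Finset.range (i.val + 1), g (r : ZMod m)) -
    ∑ s ∈ Finset.range m, (((m : ℂ) - (s : ℂ)) / (m : ℂ)) * g (s : ZMod m)

/-- The (spinless) matrix `Q̃`: its entry in row `(h,j)` and column `(i,k)` vanishes unless
`h = i + 1` in `ℤ/mℤ`, in which case it equals `φⱼ + cᵢ/λⱼ` if `k = j`, and
`−|g|·λⱼ^{m−i−1}·λₖ^{i}/(λⱼ^m − λₖ^m)` if `k ≠ j` (where `i` is taken as its representative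
in `{0,…,m−1}`). -/
def Qtilde (m n : ℕ) (g : ZMod m → ℂ) (lam phi : Fin n → ℂ) :
    Matrix (ZMod m × Fin n) (ZMod m × Fin n) ℂ :=
  Matrix.of fun p q =>
    if p.1 = q.1 + 1 then
      if q.2 = p.2 then phi p.2 + cConst m g q.1 / lam p.2
      else -(gAbs m g) * lam p.2 ^ (m - q.1.val - 1) * lam q.2 ^ q.1.val /
        (lam p.2 ^ m - lam q.2 ^ m)
    else 0

/-- `A(z) = det(z·1 − L̃)`. -/
def Afun (m n : ℕ) [NeZero m] (lam : Fin n → ℂ) (z : ℂ) : ℂ :=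
  (z • (1 : Matrix (ZMod m × Fin n) (ZMod m × Fin n) ℂ) - Ltilde m n lam).det

/-- `D(z) = tr(Q̃ · adj(z·1 − L̃))`. -/
def Dfun (m n : ℕ) [NeZero m] (g : ZMod m → ℂ) (lam phi : Fin n → ℂ) (z : ℂ) : ℂ :=
  Matrix.trace (Qtilde m n g lam phi *
    (z • (1 : Matrix (ZMod m × Fin n) (ZMod m × Fin n) ℂ) - Ltilde m n lam).adjugate)

/-- `C(z) = w̃ · Q̃ · adj(z·1 − L̃) · ṽ`, where `ṽ` has entry `1` at each index `(0,j)` and `0`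
elsewhere, and `w̃` has entry `|g|` at each index `(0,j)` and `0` elsewhere. -/
def Cfun (m n : ℕ) [NeZero m] (g : ZMod m → ℂ) (lam phi : Fin n → ℂ) (z : ℂ) : ℂ :=
  (fun p : ZMod m × Fin n => if p.1 = 0 then gAbs m g else 0) ⬝ᵥ
    ((Qtilde m n g lam phi *
        (z • (1 : Matrix (ZMod m × Fin n) (ZMod m × Fin n) ℂ) - Ltilde m n lam).adjugate) *ᵥ
      fun p : ZMod m × Fin n => if p.1 = 0 then (1 : ℂ) else 0)


section AuxAdj

open Polynomial

variable {R : Type*} [CommRing R]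

/-- The single `m × m` block `z•1 - λ·(shift)`. -/
def Mblk (m : ℕ) (z lam : R) : Matrix (ZMod m) (ZMod m) R :=
  Matrix.of fun h i => (if i = h then z else 0) - (if i = h + 1 then lam else 0)

/-- Candidate adjugate block. -/
def Bblk (m : ℕ) (z lam : R) : Matrix (ZMod m) (ZMod m) R :=
  Matrix.of fun h i => lam ^ (i - h).val * z ^ (m - 1 - (i - h).val)

def Afull (m n : ℕ) (z : R) (lam : Fin n → R) :
    Matrix (ZMod m × Fin n) (ZMod m × Fin n) R :=
  Matrix.blockDiagonal fun j => Mblk m z (lam j)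

def Bfull (m n : ℕ) (z : R) (lam : Fin n → R) :
    Matrix (ZMod m × Fin n) (ZMod m × Fin n) R :=
  Matrix.blockDiagonal fun j =>
    (∏ l ∈ Finset.univ.erase j, (z ^ m - lam l ^ m)) • Bblk m z (lam j)

lemma zmod_val_sub_one {m : ℕ} [NeZero m] {x : ZMod m} (hx : x ≠ 0) :
    (x - 1).val = x.val - 1 := by
  have h1 : 1 ≤ x.val := Nat.one_le_iff_ne_zero.2 fun h => hx ((ZMod.val_eq_zero x).1 h)
  have hlt : x.val - 1 < m := lt_of_le_of_lt (Nat.sub_le _ _) (ZMod.val_lt x)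
  have hx' : x - 1 = ((x.val - 1 : ℕ) : ZMod m) := by
    rw [Nat.cast_sub h1, Nat.cast_one, ZMod.natCast_rightInverse x]
  rw [hx', ZMod.val_cast_of_lt hlt]

lemma Mblk_mul_Bblk {m : ℕ} [NeZero m] (hm : 2 ≤ m) (z lam : R) :
    Mblk m z lam * Bblk m z lam = (z ^ m - lam ^ m) • (1 : Matrix (ZMod m) (ZMod m) R) := by
  ext h i
  rw [Matrix.mul_apply]
  simp only [Mblk, Bblk, Matrix.of_apply, sub_mul, ite_mul, zero_mul,
    Finset.sum_sub_distrib, Finset.sum_ite_eq', Finset.mem_univ, if_true,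
    Matrix.smul_apply, Matrix.one_apply, smul_eq_mul, mul_ite, mul_one, mul_zero]
  by_cases hih : i = h
  · subst hih
    obtain ⟨m', rfl⟩ : ∃ m', m = m' + 1 := ⟨m - 1, by omega⟩
    have e1 : (i - i).val = 0 := by simp
    have e2 : (i - (i + 1)).val = m' := by
      have h' : i - (i + 1) = -1 := by ring
      rw [h', ZMod.val_neg_one]
    rw [e1, e2]
    simp only [if_pos rfl]
    simp only [pow_zero, Nat.add_sub_cancel, Nat.sub_self, Nat.sub_zero, pow_zero, one_mul,
      mul_one, if_true]
    rw [pow_succ, pow_succ]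
    ring
  · have hne : i - h ≠ 0 := sub_ne_zero.2 hih
    have hd1 : 1 ≤ (i - h).val := Nat.one_le_iff_ne_zero.2 fun hh => hne ((ZMod.val_eq_zero _).1 hh)
    have hdm : (i - h).val < m := ZMod.val_lt _
    have e3 : i - (h + 1) = (i - h) - 1 := by ring
    rw [e3, zmod_val_sub_one hne]
    rw [if_neg (fun hh => hih hh.symm)]
    obtain ⟨d, hd⟩ : ∃ d, (i - h).val = d + 1 := ⟨(i - h).val - 1, by omega⟩
    rw [hd]
    have e4 : d + 1 - 1 = d := rfl
    rw [e4, show m - 1 - d = (m - 1 - (d + 1)) + 1 from by omega, pow_succ, pow_succ]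
    ring

lemma det_Mblk {m : ℕ} [NeZero m] (hm : 2 ≤ m) (z lam : R) :
    (Mblk m z lam).det = z ^ m - lam ^ m := by
  haveI : Fact (1 < m) := ⟨by omega⟩
  have h10 : (1 : ZMod m) ≠ 0 := one_ne_zero
  set c : Equiv.Perm (ZMod m) := Equiv.subRight (1 : ZMod m) with hc
  have hcapp : ∀ x : ZMod m, c x = x - 1 := fun x => rfl
  have hsub : ∀ x : ZMod m, c x ≠ x := by
    intro x h
    rw [hcapp, sub_eq_self] at h
    exact h10 h
  have hc1 : (1 : Equiv.Perm (ZMod m)) ≠ c := by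
    intro h
    exact hsub 0 (by rw [← h]; rfl)
  have hcpow : ∀ (k : ℕ) (x : ZMod m), (c ^ k) x = x - (k : ZMod m) := by
    intro k
    induction k with
    | zero => intro x; simp
    | succ k ih =>
      intro x
      rw [pow_succ, Equiv.Perm.mul_apply, ih, hcapp]
      push_cast
      ring
  have key : ∀ σ : Equiv.Perm (ZMod m), σ ≠ 1 → σ ≠ c →
      ∏ i : ZMod m, Mblk m z lam (σ i) i = 0 := by
    intro σ hσ1 hσc
    by_cases hall : ∀ i, σ i = i ∨ σ i = i - 1
    · exfalso
      obtain ⟨i₀, hi₀⟩ : ∃ i, σ i ≠ i := by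
        by_contra hB; push_neg at hB; exact hσ1 (Equiv.ext hB)
      have hi₀' : σ i₀ = i₀ - 1 := (hall i₀).resolve_left hi₀
      have step : ∀ i : ZMod m, σ i = i - 1 → σ (i - 1) = i - 1 - 1 := by
        intro i hi
        rcases hall (i - 1) with h | h
        · exfalso
          have h' : i - 1 = i := σ.injective (by rw [hi, h])
          exact h10 (sub_eq_self.mp h')
        · exact h
      have hrec : ∀ k : ℕ, σ (i₀ - (k : ZMod m)) = i₀ - (k : ZMod m) - 1 := by
        intro k
        induction k with
        | zero => simpa using hi₀'
        | succ k ih =>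
          have h2 := step _ ih
          push_cast
          convert h2 using 2 <;> ring
      apply hσc
      ext i
      have hk : i₀ - (((i₀ - i).val : ℕ) : ZMod m) = i := by
        rw [ZMod.natCast_rightInverse (i₀ - i)]; ring
      rw [hcapp, ← hk, hrec]
    · push_neg at hall
      obtain ⟨i, h1, h2⟩ := hall
      apply Finset.prod_eq_zero (Finset.mem_univ i)
      have c1 : ¬ (i = σ i) := fun h => h1 h.symm
      have c2 : ¬ (i = σ i + 1) := fun h => h2 (eq_sub_of_add_eq h.symm)
      simp [Mblk, c1, c2]
  have hcyc : c.IsCycle := by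
    refine ⟨0, hsub 0, fun y hy => ?_⟩
    refine ⟨(((-y).val : ℕ) : ℤ), ?_⟩
    rw [_root_.zpow_natCast, hcpow]
    rw [ZMod.natCast_rightInverse (-y)]
    simp
  have hsupp : c.support = Finset.univ :=
    Finset.eq_univ_iff_forall.2 fun x => Equiv.Perm.mem_support.2 (hsub x)
  have hsign : Equiv.Perm.sign c = -(-1 : ℤˣ) ^ m := by
    rw [hcyc.sign, hsupp, Finset.card_univ, ZMod.card]
  have hsum : ∑ σ : Equiv.Perm (ZMod m), Equiv.Perm.sign σ • ∏ i, Mblk m z lam (σ i) i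
      = ∑ σ ∈ ({1, c} : Finset (Equiv.Perm (ZMod m))),
          Equiv.Perm.sign σ • ∏ i, Mblk m z lam (σ i) i := by
    refine (Finset.sum_subset (Finset.subset_univ _) fun σ _ hσ => ?_).symm
    simp only [Finset.mem_insert, Finset.mem_singleton] at hσ
    push_neg at hσ
    rw [key σ hσ.1 hσ.2, smul_zero]
  have t1 : ∏ i : ZMod m, Mblk m z lam ((1 : Equiv.Perm (ZMod m)) i) i = z ^ m := by
    have he : ∀ i : ZMod m, Mblk m z lam i i = z := by
      intro i
      have hne : ¬ (i = i + 1) := fun h => h10 ((left_eq_add).1 h)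
      simp [Mblk, hne]
    calc ∏ i : ZMod m, Mblk m z lam ((1 : Equiv.Perm (ZMod m)) i) i
        = ∏ _i : ZMod m, z := Finset.prod_congr rfl fun i _ => he i
      _ = z ^ m := by simp [Finset.prod_const, ZMod.card]
  have t2 : ∏ i : ZMod m, Mblk m z lam (c i) i = (-lam) ^ m := by
    have he : ∀ i : ZMod m, Mblk m z lam (i - 1) i = -lam := by
      intro i
      have c1 : ¬ (i = i - 1) := by
        intro h
        exact h10 (sub_eq_self.mp h.symm)
      have c2 : i = i - 1 + 1 := by ring
      simp [Mblk, c1, if_pos c2.symm]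
    calc ∏ i : ZMod m, Mblk m z lam (c i) i
        = ∏ _i : ZMod m, -lam := Finset.prod_congr rfl fun i _ => by rw [hcapp, he]
      _ = (-lam) ^ m := by simp [Finset.prod_const, ZMod.card]
  rw [Matrix.det_apply, hsum, Finset.sum_pair hc1, t1, t2, hsign, Equiv.Perm.sign_one, one_smul]
  have hone : ((-1 : R)) ^ m * (-1 : R) ^ m = 1 := by rw [← mul_pow]; simp
  rw [Units.smul_def, zsmul_eq_mul]
  push_cast
  rw [neg_pow lam]
  linear_combination (-(lam ^ m)) * hone

lemma Afull_mul_Bfull {m n : ℕ} [NeZero m] (hm : 2 ≤ m) (z : R) (lam : Fin n → R) :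
    Afull m n z lam * Bfull m n z lam
      = (∏ l : Fin n, (z ^ m - lam l ^ m)) •
          (1 : Matrix (ZMod m × Fin n) (ZMod m × Fin n) R) := by
  rw [Afull, Bfull, ← Matrix.blockDiagonal_mul]
  have he : (fun j => Mblk m z (lam j) *
      ((∏ l ∈ Finset.univ.erase j, (z ^ m - lam l ^ m)) • Bblk m z (lam j)))
      = fun _j => (∏ l : Fin n, (z ^ m - lam l ^ m)) • (1 : Matrix (ZMod m) (ZMod m) R) := by
    funext j
    rw [mul_smul_comm, Mblk_mul_Bblk hm, smul_smul, Finset.prod_erase_mul _ _ (Finset.mem_univ j)]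
  rw [he, show (fun _j : Fin n => (∏ l : Fin n, (z ^ m - lam l ^ m)) •
      (1 : Matrix (ZMod m) (ZMod m) R)) = (∏ l : Fin n, (z ^ m - lam l ^ m)) •
      (fun _j => (1 : Matrix (ZMod m) (ZMod m) R)) from rfl, Matrix.blockDiagonal_smul]
  congr 1
  exact Matrix.blockDiagonal_one

lemma det_Afull {m n : ℕ} [NeZero m] (hm : 2 ≤ m) (z : R) (lam : Fin n → R) :
    (Afull m n z lam).det = ∏ l : Fin n, (z ^ m - lam l ^ m) := by
  rw [Afull, Matrix.det_blockDiagonal]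
  exact Finset.prod_congr rfl fun j _ => det_Mblk hm z (lam j)

lemma eq_adjugate_of {ι : Type*} [Fintype ι] [DecidableEq ι] {S : Type*} [CommRing S]
    [IsDomain S] (A B : Matrix ι ι S) (hd : A.det ≠ 0) (h : A * B = A.det • 1) :
    B = A.adjugate := by
  have h2 : A.adjugate * (A * B) = A.adjugate * (A.det • 1) := by rw [h]
  rw [← Matrix.mul_assoc, Matrix.adjugate_mul, Matrix.smul_mul, Matrix.one_mul,
    Matrix.mul_smul, Matrix.mul_one] at h2
  ext i j
  exact mul_left_cancel₀ hd
    (by simpa [Matrix.smul_apply, smul_eq_mul] using congrFun (congrFun h2 i) j)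

lemma adj_Afull_poly {m n : ℕ} [NeZero m] (hm : 2 ≤ m) (lam : Fin n → ℂ) :
    (Afull m n (X : ℂ[X]) (fun j => C (lam j))).adjugate
      = Bfull m n (X : ℂ[X]) (fun j => C (lam j)) := by
  refine (eq_adjugate_of _ _ ?_ ?_).symm
  · rw [det_Afull hm]
    refine Finset.prod_ne_zero_iff.2 fun l _ => ?_
    rw [← map_pow]
    exact X_pow_sub_C_ne_zero (by omega) _
  · rw [Afull_mul_Bfull hm, det_Afull hm]

lemma map_Afull {m n : ℕ} [NeZero m] (lam : Fin n → ℂ) (z : ℂ) :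
    (Polynomial.evalRingHom z).mapMatrix (Afull m n (X : ℂ[X]) (fun j => C (lam j)))
      = Afull m n z lam := by
  ext ⟨h, j⟩ ⟨i, k⟩
  simp only [RingHom.mapMatrix_apply, Matrix.map_apply, Afull, Mblk,
    Matrix.blockDiagonal_apply, Matrix.of_apply]
  by_cases hjk : j = k <;> simp [hjk, apply_ite (Polynomial.eval z)]

lemma map_Bfull {m n : ℕ} [NeZero m] (lam : Fin n → ℂ) (z : ℂ) :
    (Polynomial.evalRingHom z).mapMatrix (Bfull m n (X : ℂ[X]) (fun j => C (lam j)))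
      = Bfull m n z lam := by
  ext ⟨h, j⟩ ⟨i, k⟩
  simp only [RingHom.mapMatrix_apply, Matrix.map_apply, Bfull, Bblk,
    Matrix.blockDiagonal_apply, Matrix.of_apply, Matrix.smul_apply, smul_eq_mul]
  by_cases hjk : j = k <;> simp [hjk, Polynomial.eval_prod]

lemma adj_A {m n : ℕ} [NeZero m] (hm : 2 ≤ m) (lam : Fin n → ℂ) (z : ℂ) :
    (z • (1 : Matrix (ZMod m × Fin n) (ZMod m × Fin n) ℂ) - Ltilde m n lam).adjugate
      = Bfull m n z lam := by
  have hA : z • (1 : Matrix (ZMod m × Fin n) (ZMod m × Fin n) ℂ) - Ltilde m n lam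
      = Afull m n z lam := by
    ext ⟨h, j⟩ ⟨i, k⟩
    simp only [Matrix.sub_apply, Matrix.smul_apply, Matrix.one_apply, Ltilde, Afull, Mblk,
      Matrix.blockDiagonal_apply, Matrix.of_apply, smul_eq_mul, mul_ite, mul_one, mul_zero,
      Prod.mk.injEq]
    by_cases hjk : j = k
    · subst hjk
      rcases eq_or_ne h i with rfl | hhi
      · simp [eq_comm, and_comm]
      · have hhi' : ¬ i = h := fun hh => hhi hh.symm
        by_cases hhi2 : i = h + 1 <;> simp [hhi, hhi', hhi2, and_comm]
    · simp [hjk, fun h : k = j => hjk h.symm, Ne.symm hjk]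
  rw [hA, ← map_Afull lam z, ← RingHom.map_adjugate, adj_Afull_poly hm, map_Bfull]

end AuxAdj

/-- For `m ≥ 2`,
`C(z) = |g| · Σ_{j} Σ_{t} Q̃_{(0,j),(m−1,t)} · λ_t · z^{m−2} · ∏_{ℓ≠t} (z^m − λ_ℓ^m)`. -/
theorem Cfun_formula (m n : ℕ) [NeZero m] (hm : 2 ≤ m) (hn : 0 < n)
    (lam phi : Fin n → ℂ) (g : ZMod m → ℂ)
    (hlam : ∀ j, lam j ≠ 0)
    (hsep : ∀ j k : Fin n, j ≠ k → lam j ^ m ≠ lam k ^ m) (z : ℂ) :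
    Cfun m n g lam phi z =
      gAbs m g * ∑ j : Fin n, ∑ t : Fin n,
        Qtilde m n g lam phi (0, j) ((m : ZMod m) - 1, t) * lam t * z ^ (m - 2) *
          ∏ l ∈ Finset.univ.erase t, (z ^ m - lam l ^ m) := by
  haveI : Fact (1 < m) := ⟨by omega⟩
  have hQB : ∀ (j t : Fin n),
      (Qtilde m n g lam phi * Bfull m n z lam) (0, j) (0, t)
        = Qtilde m n g lam phi (0, j) (-1, t) *
            ((∏ l ∈ Finset.univ.erase t, (z ^ m - lam l ^ m)) * (lam t * z ^ (m - 2))) := by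
    intro j t
    rw [Matrix.mul_apply, Fintype.sum_prod_type]
    have hBf : ∀ (i : ZMod m) (k : Fin n), Bfull m n z lam (i, k) (0, t)
        = if k = t then (∏ l ∈ Finset.univ.erase t, (z ^ m - lam l ^ m)) *
            (lam t ^ ((0 : ZMod m) - i).val * z ^ (m - 1 - ((0 : ZMod m) - i).val)) else 0 := by
      intro i k
      by_cases hkt : k = t <;>
        simp [Bfull, Matrix.blockDiagonal_apply, Bblk, hkt]
    simp only [hBf, mul_ite, mul_zero, Finset.sum_ite_eq', Finset.mem_univ, if_true]
    rw [Finset.sum_eq_single (-1 : ZMod m)]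
    · have e1 : ((0 : ZMod m) - (-1)).val = 1 := by
        rw [show (0 : ZMod m) - (-1) = 1 from by ring, ZMod.val_one]
      rw [e1, pow_one, show m - 1 - 1 = m - 2 from by omega]
    · intro i _ hne
      have hQ0 : Qtilde m n g lam phi (0, j) (i, t) = 0 := by
        simp only [Qtilde, Matrix.of_apply]
        exact if_neg (fun h => hne (eq_neg_of_add_eq_zero_left h.symm))
      rw [hQ0, zero_mul]
    · intro h
      exact absurd (Finset.mem_univ _) h
  have hm1 : ((m : ZMod m) - 1 : ZMod m) = -1 := by
    rw [ZMod.natCast_self]; ring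
  have hdot : ∀ (u : ZMod m × Fin n → ℂ),
      ((fun p : ZMod m × Fin n => if p.1 = 0 then gAbs m g else 0) ⬝ᵥ u)
        = ∑ j : Fin n, gAbs m g * u (0, j) := by
    intro u
    rw [dotProduct, Fintype.sum_prod_type]
    rw [Finset.sum_eq_single (0 : ZMod m)]
    · simp
    · intro h _ hne
      simp [hne]
    · intro h
      exact absurd (Finset.mem_univ _) h
  have hmv : ∀ p : ZMod m × Fin n,
      ((Qtilde m n g lam phi * Bfull m n z lam) *ᵥ
          (fun p : ZMod m × Fin n => if p.1 = 0 then (1 : ℂ) else 0)) p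
        = ∑ t : Fin n, (Qtilde m n g lam phi * Bfull m n z lam) p (0, t) := by
    intro p
    rw [Matrix.mulVec, dotProduct, Fintype.sum_prod_type]
    rw [Finset.sum_eq_single (0 : ZMod m)]
    · simp
    · intro i _ hne
      simp [hne]
    · intro h
      exact absurd (Finset.mem_univ _) h
  rw [Cfun, adj_A hm, hdot]
  simp only [hmv]
  rw [Finset.mul_sum]
  refine Finset.sum_congr rfl fun j _ => ?_
  rw [Finset.mul_sum, Finset.mul_sum]
  refine Finset.sum_congr rfl fun t _ => ?_
  rw [hQB j t, hm1]
  ring
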